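/- Suppose f is L-smooth and g is convex and M-Lipschitz, and let the step size satisfy η < 1/(16L). Then for any x₁, x₂ ∈ ℝ^d, the proposal distributions satisfy d_TV(P_{x₁}, P_{x₂}) ≤ ‖x₁ − x₂‖/√η. -/

import Mathlib

open MeasureTheory Real
open scoped ENNReal RealInnerProductSpace

noncomputable section

/-- Euclidean space ℝ^d. -/
abbrev Euc (d : ℕ) := EuclideanSpace ℝ (Fin d)

/-- Total variation distance between two measures: the supremum over Borel sets `A`
of `|P A - Q A|`. -/
def tvDist {X : Type*} [MeasurableSpace X] (P Q : Measure X) : ℝ :=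
  ⨆ A : {s : Set X // MeasurableSet s}, |(P A.1).toReal - (Q A.1).toReal|

/-- The smoothed partition function `Z(u) = ∫ exp(−‖y−u‖²/(4η) − g(y)) dy`. -/
def Zfun (d : ℕ) (η : ℝ) (g : Euc d → ℝ) (u : Euc d) : ℝ :=
  ∫ y, Real.exp (-‖y - u‖ ^ 2 / (4 * η) - g y)

/-- The proposal density
`p(x,y) = Z(x−η∇f(x))⁻¹ · exp(−‖y−(x−η∇f(x))‖²/(4η) − g(y))`. -/
def propDensity (d : ℕ) (η : ℝ) (f g : Euc d → ℝ) (x y : Euc d) : ℝ :=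
  (Zfun d η g (x - η • gradient f x))⁻¹ *
    Real.exp (-‖y - (x - η • gradient f x)‖ ^ 2 / (4 * η) - g y)

/-- The proposal distribution `P_x`, with density `p(x,·)`. -/
def propMeasure (d : ℕ) (η : ℝ) (f g : Euc d → ℝ) (x : Euc d) : Measure (Euc d) :=
  volume.withDensity fun y => ENNReal.ofReal (propDensity d η f g x y)

/-- The Metropolis–Hastings acceptance probability
`α(x,y) = min(1, e^{−U(y)} p(y,x) / (e^{−U(x)} p(x,y)))`, with `U = f + g`. -/
def accept (d : ℕ) (η : ℝ) (f g : Euc d → ℝ) (x y : Euc d) : ℝ :=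
  min 1 (Real.exp (-(f y + g y)) * propDensity d η f g y x /
    (Real.exp (-(f x + g x)) * propDensity d η f g x y))

/-- The Metropolis transition kernel
`T_x(A) = ∫_A p(x,y) α(x,y) dy + δ_x(A) ∫ (1−α(x,y)) p(x,y) dy`. -/
def transKernel (d : ℕ) (η : ℝ) (f g : Euc d → ℝ) (x : Euc d) : Measure (Euc d) :=
  (volume.withDensity fun y =>
      ENNReal.ofReal (propDensity d η f g x y * accept d η f g x y)) +
  ENNReal.ofReal (∫ y, (1 - accept d η f g x y) * propDensity d η f g x y) • Measure.dirac x

/-- The rejection probability `p^rej_x = ∫ (1−α(x,y)) p(x,y) dy`. -/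
def rejProb (d : ℕ) (η : ℝ) (f g : Euc d → ℝ) (x : Euc d) : ℝ :=
  ∫ y, (1 - accept d η f g x y) * propDensity d η f g x y

/-- Unnormalized density `min(p(x,y), e^{U(x)−U(y)} p(y,x))` of the successful-transition
kernel, with `U = f + g`. -/
def succDensity (d : ℕ) (η : ℝ) (f g : Euc d → ℝ) (x y : Euc d) : ℝ :=
  min (propDensity d η f g x y)
    (Real.exp ((f x + g x) - (f y + g y)) * propDensity d η f g y x)

/-- The successful-transition kernel `T^succ_x`, with density proportional to
`min(p(x,y), e^{U(x)−U(y)} p(y,x))`. -/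
def succKernel (d : ℕ) (η : ℝ) (f g : Euc d → ℝ) (x : Euc d) : Measure (Euc d) :=
  volume.withDensity fun y =>
    ENNReal.ofReal ((∫ z, succDensity d η f g x z)⁻¹ * succDensity d η f g x y)

/-- The target measure `Π` with density proportional to `exp(−(f+g))`. -/
def targetMeasure (d : ℕ) (f g : Euc d → ℝ) : Measure (Euc d) :=
  volume.withDensity fun x =>
    ENNReal.ofReal ((∫ z, Real.exp (-(f z + g z)))⁻¹ * Real.exp (-(f x + g x)))

/-- The proximal sampling distribution `O_{η,g}(y)`, with density proportional to
`exp(−‖q−y‖²/(4η) − g(q))`. -/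
def proxMeasure (d : ℕ) (η : ℝ) (g : Euc d → ℝ) (y : Euc d) : Measure (Euc d) :=
  volume.withDensity fun q =>
    ENNReal.ofReal ((Zfun d η g y)⁻¹ * Real.exp (-‖q - y‖ ^ 2 / (4 * η) - g q))


-- ===== Auxiliary development: Prékopa–Leindler (θ = 1/2) and consequences =====
set_option maxHeartbeats 1600000

section AuxPL
open Set
open scoped Pointwise NNReal

lemma mid_image_vol (K : Set ℝ) (c : ℝ) :
    volume ((fun x => (x + c) / 2) '' K) = volume K / 2 := by
  have : (fun x : ℝ => (x + c) / 2) = (fun x : ℝ => (c/2) + x) ∘ (fun x : ℝ => (2:ℝ)⁻¹ • x) := by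
    funext x; simp [Function.comp]; ring
  rw [this, Set.image_comp]
  have h1 : volume ((fun x : ℝ => (c/2) + x) '' ((fun x : ℝ => (2:ℝ)⁻¹ • x) '' K))
      = volume ((fun x : ℝ => (2:ℝ)⁻¹ • x) '' K) := by
    rw [show (fun x : ℝ => (c/2) + x) '' ((fun x : ℝ => (2:ℝ)⁻¹ • x) '' K)
        = (c/2) +ᵥ ((fun x : ℝ => (2:ℝ)⁻¹ • x) '' K) from rfl]
    exact measure_vadd _ _ _
  rw [h1, show (fun x : ℝ => (2:ℝ)⁻¹ • x) '' K = (2:ℝ)⁻¹ • K from rfl, Measure.addHaar_smul]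
  rw [show |((2:ℝ)⁻¹) ^ Module.finrank ℝ ℝ| = ((2:ℝ))⁻¹ by
      rw [Module.finrank_self]; norm_num,
    ENNReal.ofReal_inv_of_pos (by norm_num), ENNReal.div_eq_inv_mul]
  norm_num

lemma compact_mid (K₁ K₂ : Set ℝ) (h₁ : IsCompact K₁) (h₂ : IsCompact K₂)
    (ne₁ : K₁.Nonempty) (ne₂ : K₂.Nonempty) :
    volume K₁ + volume K₂ ≤ 2 * volume (Set.image2 (fun x y => (x + y) / 2) K₁ K₂) := by
  set m₁ := sSup K₁ with hm₁
  set m₂ := sInf K₂ with hm₂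
  have hm₁K : m₁ ∈ K₁ := h₁.sSup_mem ne₁
  have hm₂K : m₂ ∈ K₂ := h₂.sInf_mem ne₂
  set S₁ := (fun x => (x + m₂) / 2) '' K₁ with hS₁
  set S₂ := (fun y => (m₁ + y) / 2) '' K₂ with hS₂
  have hS₁sub : S₁ ⊆ Set.image2 (fun x y => (x + y) / 2) K₁ K₂ := by
    rintro _ ⟨x, hx, rfl⟩; exact ⟨x, hx, m₂, hm₂K, rfl⟩
  have hS₂sub : S₂ ⊆ Set.image2 (fun x y => (x + y) / 2) K₁ K₂ := by
    rintro _ ⟨y, hy, rfl⟩; exact ⟨m₁, hm₁K, y, hy, rfl⟩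
  have hc₁ : S₁ ⊆ Iic ((m₁ + m₂)/2) := by
    rintro _ ⟨x, hx, rfl⟩
    have : x ≤ m₁ := le_csSup h₁.bddAbove hx
    simp only [mem_Iic]; linarith
  have hc₂ : S₂ ⊆ Ici ((m₁ + m₂)/2) := by
    rintro _ ⟨y, hy, rfl⟩
    have : m₂ ≤ y := csInf_le h₂.bddBelow hy
    simp only [mem_Ici]; linarith
  have hinter : volume (S₁ ∩ S₂) = 0 := by
    have : S₁ ∩ S₂ ⊆ {(m₁ + m₂)/2} := by
      intro z hz
      have := hc₁ hz.1; have := hc₂ hz.2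
      simp only [mem_Iic] at *; simp only [mem_Ici] at *
      simp only [mem_singleton_iff]; linarith
    exact measure_mono_null this Real.volume_singleton
  have hS₂meas : MeasurableSet S₂ := by
    have : IsCompact S₂ := h₂.image (by continuity)
    exact this.isClosed.measurableSet
  have key : volume S₁ + volume S₂ ≤ volume (Set.image2 (fun x y => (x + y) / 2) K₁ K₂) := by
    calc volume S₁ + volume S₂ = volume (S₁ ∪ S₂) + volume (S₁ ∩ S₂) :=
          (measure_union_add_inter S₁ hS₂meas).symm
    _ = volume (S₁ ∪ S₂) := by rw [hinter, add_zero]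
    _ ≤ _ := measure_mono (Set.union_subset hS₁sub hS₂sub)
  have hv₁ : volume S₁ = volume K₁ / 2 := mid_image_vol K₁ m₂
  have hv₂ : volume S₂ = volume K₂ / 2 := by
    have : S₂ = (fun y => (y + m₁) / 2) '' K₂ := by
      apply Set.image_congr; intro y _; ring
    rw [this]; exact mid_image_vol K₂ m₁
  rw [hv₁, hv₂] at key
  calc volume K₁ + volume K₂ = 2 * (volume K₁ / 2 + volume K₂ / 2) := by
        rw [mul_add, ENNReal.mul_div_cancel' (by norm_num) (by norm_num),
          ENNReal.mul_div_cancel' (by norm_num) (by norm_num)]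
  _ ≤ 2 * volume (Set.image2 (fun x y => (x + y) / 2) K₁ K₂) := by
        exact mul_le_mul_right key 2

lemma levelset_mid (A B C : Set ℝ) (hA : MeasurableSet A) (hB : MeasurableSet B)
    (neA : A.Nonempty) (neB : B.Nonempty)
    (hmid : ∀ x ∈ A, ∀ y ∈ B, (x + y) / 2 ∈ C) :
    volume A + volume B ≤ 2 * volume C := by
  obtain ⟨a₀, ha₀⟩ := neA
  obtain ⟨b₀, hb₀⟩ := neB
  -- compact case first
  have hcpt : ∀ K₁ K₂ : Set ℝ, IsCompact K₁ → IsCompact K₂ → K₁.Nonempty → K₂.Nonempty →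
      K₁ ⊆ A → K₂ ⊆ B → volume K₁ + volume K₂ ≤ 2 * volume C := by
    intro K₁ K₂ h₁ h₂ n₁ n₂ s₁ s₂
    refine le_trans (compact_mid K₁ K₂ h₁ h₂ n₁ n₂) (mul_le_mul_right (measure_mono ?_) 2)
    rintro _ ⟨x, hx, y, hy, rfl⟩
    exact hmid x (s₁ hx) y (s₂ hy)
  -- truncated sets
  have main : ∀ n m : ℕ, volume (A ∩ Icc (-(n:ℝ)) n) + volume (B ∩ Icc (-(m:ℝ)) m)
      ≤ 2 * volume C := by
    intro n m
    set An := A ∩ Icc (-(n:ℝ)) n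
    set Bm := B ∩ Icc (-(m:ℝ)) m
    have hAn : MeasurableSet An := hA.inter measurableSet_Icc
    have hBm : MeasurableSet Bm := hB.inter measurableSet_Icc
    have hAfin : volume An ≠ ⊤ :=
      ne_top_of_le_ne_top (by simp [Real.volume_Icc]) (measure_mono Set.inter_subset_right)
    have hBfin : volume Bm ≠ ⊤ :=
      ne_top_of_le_ne_top (by simp [Real.volume_Icc]) (measure_mono Set.inter_subset_right)
    by_cases hC : volume C = ⊤
    · rw [hC]
      simp only [ENNReal.mul_top (by norm_num : (2:ℝ≥0∞) ≠ 0)]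
      exact le_top
    refine ENNReal.le_of_forall_pos_le_add fun εr hε h2C => ?_
    obtain ⟨K₁, hK₁sub, hK₁cpt, hK₁⟩ := hAn.exists_isCompact_lt_add (μ := volume) hAfin
      (show ((εr:ℝ≥0∞)/2) ≠ 0 by simp [hε.ne'])
    obtain ⟨K₂, hK₂sub, hK₂cpt, hK₂⟩ := hBm.exists_isCompact_lt_add (μ := volume) hBfin
      (show ((εr:ℝ≥0∞)/2) ≠ 0 by simp [hε.ne'])
    have key := hcpt (K₁ ∪ {a₀}) (K₂ ∪ {b₀}) (hK₁cpt.union isCompact_singleton)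
      (hK₂cpt.union isCompact_singleton) (by simp) (by simp)
      (Set.union_subset (hK₁sub.trans Set.inter_subset_left) (by simpa using ha₀))
      (Set.union_subset (hK₂sub.trans Set.inter_subset_left) (by simpa using hb₀))
    have e₁ : volume An ≤ volume (K₁ ∪ {a₀}) + (εr:ℝ≥0∞)/2 :=
      le_trans hK₁.le (add_le_add_left (measure_mono Set.subset_union_left) _)
    have e₂ : volume Bm ≤ volume (K₂ ∪ {b₀}) + (εr:ℝ≥0∞)/2 :=
      le_trans hK₂.le (add_le_add_left (measure_mono Set.subset_union_left) _)
    calc volume An + volume Bm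
        ≤ (volume (K₁ ∪ {a₀}) + (εr:ℝ≥0∞)/2) + (volume (K₂ ∪ {b₀}) + (εr:ℝ≥0∞)/2) :=
          add_le_add e₁ e₂
      _ = (volume (K₁ ∪ {a₀}) + volume (K₂ ∪ {b₀})) + ((εr:ℝ≥0∞)/2 + (εr:ℝ≥0∞)/2) := by ring
      _ ≤ 2 * volume C + (εr:ℝ≥0∞) := by
          rw [ENNReal.add_halves]
          exact add_le_add_left key _
  -- pass to the limit
  have hAU : A = ⋃ n : ℕ, A ∩ Icc (-(n:ℝ)) n := by
    ext x; simp only [Set.mem_iUnion, Set.mem_inter_iff, Set.mem_Icc]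
    constructor
    · intro hx
      obtain ⟨n, hn⟩ := exists_nat_ge |x|
      exact ⟨n, hx, by cases abs_le.1 hn; constructor <;> linarith⟩
    · rintro ⟨n, hx, _⟩; exact hx
  have hBU : B = ⋃ m : ℕ, B ∩ Icc (-(m:ℝ)) m := by
    ext x; simp only [Set.mem_iUnion, Set.mem_inter_iff, Set.mem_Icc]
    constructor
    · intro hx
      obtain ⟨n, hn⟩ := exists_nat_ge |x|
      exact ⟨n, hx, by cases abs_le.1 hn; constructor <;> linarith⟩
    · rintro ⟨n, hx, _⟩; exact hx
  have hmono : ∀ (S : Set ℝ), Monotone (fun n : ℕ => S ∩ Icc (-(n:ℝ)) n) := by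
    intro S n m hnm
    exact Set.inter_subset_inter_right _ (Set.Icc_subset_Icc
      (neg_le_neg (by exact_mod_cast hnm)) (by exact_mod_cast hnm))
  have hA' : volume A = ⨆ n : ℕ, volume (A ∩ Icc (-(n:ℝ)) n) := by
    conv_lhs => rw [hAU]
    exact Directed.measure_iUnion (hmono A).directed_le
  have hB' : volume B = ⨆ m : ℕ, volume (B ∩ Icc (-(m:ℝ)) m) := by
    conv_lhs => rw [hBU]
    exact Directed.measure_iUnion (hmono B).directed_le
  rw [hA', hB']
  exact ENNReal.iSup_add_iSup_le main

lemma amgm_ennreal (u v : ℝ≥0∞) : 4 * (u * v) ≤ (u + v) ^ 2 := by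
  rcases eq_or_ne u ⊤ with hu | hu
  · rcases eq_or_ne v 0 with hv | hv
    · simp [hv]
    · rw [hu]
      have : ((⊤:ℝ≥0∞) + v)^2 = ⊤ := by simp [pow_two]
      rw [this]; exact le_top
  rcases eq_or_ne v ⊤ with hv | hv
  · rcases eq_or_ne u 0 with hu' | hu'
    · simp [hu']
    · rw [hv]
      have : (u + (⊤:ℝ≥0∞))^2 = ⊤ := by simp [pow_two]
      rw [this]; exact le_top
  lift u to ℝ≥0 using hu
  lift v to ℝ≥0 using hv
  rw [← ENNReal.coe_mul, ← ENNReal.coe_add, ← ENNReal.coe_pow,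
    show (4:ℝ≥0∞) = ((4:ℝ≥0):ℝ≥0∞) by norm_num, ← ENNReal.coe_mul, ENNReal.coe_le_coe,
    ← NNReal.coe_le_coe]
  push_cast
  nlinarith [sq_nonneg ((u:ℝ) - v), NNReal.coe_nonneg u, NNReal.coe_nonneg v]

lemma pl_one_core (f g h : ℝ → ℝ≥0∞) (hf : Measurable f) (hg : Measurable g) (hh : Measurable h)
    (s : ℝ≥0∞) (hs0 : s ≠ 0) (hstop : s ≠ ⊤)
    (hsupf : (⨆ x, f x) = s) (hsupg : (⨆ x, g x) = s)
    (hyp : ∀ x y, f x * g y ≤ (h ((x + y) / 2)) ^ 2) :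
    (∫⁻ x, f x) + (∫⁻ x, g x) ≤ 2 * ∫⁻ x, h x := by
  classical
  set h' : ℝ → ℝ≥0∞ := fun x => min (h x) s with hh'def
  have hh' : Measurable h' := hh.min measurable_const
  have hfle : ∀ x, f x ≤ s := fun x => hsupf ▸ le_iSup f x
  have hgle : ∀ x, g x ≤ s := fun x => hsupg ▸ le_iSup g x
  have hh'le : ∀ x, h' x ≤ s := fun x => min_le_right _ _
  have hfne : ∀ x, f x ≠ ⊤ := fun x => ne_top_of_le_ne_top hstop (hfle x)
  have hgne : ∀ x, g x ≠ ⊤ := fun x => ne_top_of_le_ne_top hstop (hgle x)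
  have hh'ne : ∀ x, h' x ≠ ⊤ := fun x => ne_top_of_le_ne_top hstop (hh'le x)
  -- layer cake representations
  have layer : ∀ (φ : ℝ → ℝ≥0∞), Measurable φ → (∀ x, φ x ≠ ⊤) →
      (∫⁻ x, φ x) = ∫⁻ t in Ioi (0:ℝ), volume {x | ENNReal.ofReal t < φ x} := by
    intro φ hφ hφne
    have h1 : (∫⁻ x, φ x) = ∫⁻ x, ENNReal.ofReal ((φ x).toReal) := by
      apply lintegral_congr; intro x; rw [ENNReal.ofReal_toReal (hφne x)]
    rw [h1, lintegral_eq_lintegral_meas_lt volume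
      (Filter.Eventually.of_forall fun x => ENNReal.toReal_nonneg)
      hφ.ennreal_toReal.aemeasurable]
    apply setLIntegral_congr_fun measurableSet_Ioi
    intro t ht
    dsimp only
    congr 1
    ext x
    simp only [Set.mem_setOf_eq]
    exact (ENNReal.ofReal_lt_iff_lt_toReal (le_of_lt ht) (hφne x)).symm
  -- the level set inequality
  have level : ∀ t ∈ Ioi (0:ℝ),
      volume {x | ENNReal.ofReal t < f x} + volume {x | ENNReal.ofReal t < g x}
        ≤ 2 * volume {x | ENNReal.ofReal t < h' x} := by
    intro t ht
    set τ := ENNReal.ofReal t with hτ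
    by_cases hts : τ < s
    · obtain ⟨x₀, hx₀⟩ := lt_iSup_iff.mp (hsupf ▸ hts)
      obtain ⟨y₀, hy₀⟩ := lt_iSup_iff.mp (hsupg ▸ hts)
      apply levelset_mid _ _ _ (hf measurableSet_Ioi) (hg measurableSet_Ioi) ⟨x₀, hx₀⟩ ⟨y₀, hy₀⟩
      intro x hx y hy
      have hx' : τ < f x := hx
      have hy' : τ < g y := hy
      show τ < h' ((x + y) / 2)
      have hmidlt : τ < h ((x + y) / 2) := by
        by_contra hcon
        push_neg at hcon
        have h2 : (h ((x + y) / 2)) ^ 2 ≤ τ ^ 2 := pow_le_pow_left' hcon 2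
        have h3 : f x * g y ≤ τ ^ 2 := le_trans (hyp x y) h2
        rcases eq_or_ne τ 0 with h0 | h0
        · have h4 : f x * g y = 0 := le_antisymm (by simpa [h0] using h3) (zero_le)
          exact (ENNReal.mul_pos (h0 ▸ hx').ne' (h0 ▸ hy').ne').ne' h4
        · have hlt : τ * τ < f x * g y :=
            lt_of_lt_of_le (ENNReal.mul_lt_mul_left h0 ENNReal.ofReal_ne_top hx')
              (mul_le_mul_right hy'.le _)
          rw [pow_two] at h3
          exact absurd h3 (not_le.mpr hlt)
      exact lt_min hmidlt hts
    · push_neg at hts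
      have hA : {x | τ < f x} = ∅ := by
        ext x; simp only [Set.mem_setOf_eq, Set.mem_empty_iff_false, iff_false, not_lt]
        exact le_trans (hfle x) hts
      have hB : {x | τ < g x} = ∅ := by
        ext x; simp only [Set.mem_setOf_eq, Set.mem_empty_iff_false, iff_false, not_lt]
        exact le_trans (hgle x) hts
      rw [hA, hB]
      simp
  -- antitone measurability
  have hmeasA : ∀ (φ : ℝ → ℝ≥0∞), Measurable (fun t : ℝ => volume {x | ENNReal.ofReal t < φ x}) := by
    intro φ
    apply Antitone.measurable
    intro t₁ t₂ h12
    apply measure_mono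
    intro x hx
    exact lt_of_le_of_lt (ENNReal.ofReal_le_ofReal h12) hx
  rw [layer f hf hfne, layer g hg hgne]
  have step1 : (∫⁻ t in Ioi (0:ℝ), volume {x | ENNReal.ofReal t < f x}) +
      (∫⁻ t in Ioi (0:ℝ), volume {x | ENNReal.ofReal t < g x}) =
      ∫⁻ t in Ioi (0:ℝ), (volume {x | ENNReal.ofReal t < f x} +
        volume {x | ENNReal.ofReal t < g x}) := (lintegral_add_left (hmeasA f) _).symm
  rw [step1]
  calc ∫⁻ t in Ioi (0:ℝ), (volume {x | ENNReal.ofReal t < f x} + volume {x | ENNReal.ofReal t < g x})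
      ≤ ∫⁻ t in Ioi (0:ℝ), 2 * volume {x | ENNReal.ofReal t < h' x} :=
        setLIntegral_mono (by exact (hmeasA h').const_mul 2) level
    _ = 2 * ∫⁻ t in Ioi (0:ℝ), volume {x | ENNReal.ofReal t < h' x} := by
        rw [← lintegral_const_mul'' 2 ((hmeasA h').aemeasurable.restrict)]
    _ = 2 * ∫⁻ x, h' x := by rw [← layer h' hh' hh'ne]
    _ ≤ 2 * ∫⁻ x, h x := mul_le_mul_right (lintegral_mono fun x => min_le_left _ _) 2

lemma pl_one_bounded (f g h : ℝ → ℝ≥0∞) (hf : Measurable f) (hg : Measurable g)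
    (hh : Measurable h) (N : ℝ≥0) (hfN : ∀ x, f x ≤ N) (hgN : ∀ x, g x ≤ N)
    (hyp : ∀ x y, f x * g y ≤ (h ((x + y) / 2)) ^ 2) :
    (∫⁻ x, f x) * (∫⁻ x, g x) ≤ (∫⁻ x, h x) ^ 2 := by
  classical
  set a := ⨆ x, f x with ha
  set b := ⨆ x, g x with hb
  have hatop : a ≠ ⊤ := ne_top_of_le_ne_top ENNReal.coe_ne_top (iSup_le hfN)
  have hbtop : b ≠ ⊤ := ne_top_of_le_ne_top ENNReal.coe_ne_top (iSup_le hgN)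
  rcases eq_or_ne a 0 with ha0 | ha0
  · have hf0 : ∀ x, f x = 0 := fun x => le_antisymm (ha0 ▸ le_iSup f x) (zero_le)
    have : (∫⁻ x, f x) = 0 := by
      rw [show (fun x => f x) = (fun _ : ℝ => (0:ℝ≥0∞)) from funext hf0]; simp
    rw [this, zero_mul]; exact zero_le
  rcases eq_or_ne b 0 with hb0 | hb0
  · have hg0 : ∀ x, g x = 0 := fun x => le_antisymm (hb0 ▸ le_iSup g x) (zero_le)
    have : (∫⁻ x, g x) = 0 := by
      rw [show (fun x => g x) = (fun _ : ℝ => (0:ℝ≥0∞)) from funext hg0]; simp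
    rw [this, mul_zero]; exact zero_le
  set a' := a.toNNReal with ha'
  set b' := b.toNNReal with hb'
  have ha'0 : a' ≠ 0 := by
    simp [ha', ENNReal.toNNReal_eq_zero_iff, ha0, hatop]
  have hb'0 : b' ≠ 0 := by
    simp [hb', ENNReal.toNNReal_eq_zero_iff, hb0, hbtop]
  set s' := NNReal.sqrt (a' * b') with hs'
  have hs'0 : s' ≠ 0 := by
    simp [hs', NNReal.sqrt_eq_zero, mul_eq_zero, ha'0, hb'0]
  set cf : ℝ≥0 := s' / a' with hcf
  set cg : ℝ≥0 := s' / b' with hcg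
  have hcfcg : cf * cg = 1 := by
    rw [hcf, hcg, div_mul_div_comm, NNReal.mul_self_sqrt, div_self (mul_ne_zero ha'0 hb'0)]
  set f' : ℝ → ℝ≥0∞ := fun x => (cf : ℝ≥0∞) * f x with hf'
  set g' : ℝ → ℝ≥0∞ := fun x => (cg : ℝ≥0∞) * g x with hg'
  have hf'm : Measurable f' := hf.const_mul _
  have hg'm : Measurable g' := hg.const_mul _
  have hsupf' : (⨆ x, f' x) = (s' : ℝ≥0∞) := by
    rw [hf', ← ENNReal.mul_iSup, ← ha, ← ENNReal.coe_toNNReal hatop, ← ha', ← ENNReal.coe_mul,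
      hcf, div_mul_cancel₀ _ ha'0]
  have hsupg' : (⨆ x, g' x) = (s' : ℝ≥0∞) := by
    rw [hg', ← ENNReal.mul_iSup, ← hb, ← ENNReal.coe_toNNReal hbtop, ← hb', ← ENNReal.coe_mul,
      hcg, div_mul_cancel₀ _ hb'0]
  have hyp' : ∀ x y, f' x * g' y ≤ (h ((x + y) / 2)) ^ 2 := by
    intro x y
    calc f' x * g' y = ((cf * cg : ℝ≥0) : ℝ≥0∞) * (f x * g y) := by
          rw [hf', hg', ENNReal.coe_mul]; ring
    _ = f x * g y := by rw [hcfcg]; simp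
    _ ≤ _ := hyp x y
  have core := pl_one_core f' g' h hf'm hg'm hh (s' : ℝ≥0∞) (by exact_mod_cast hs'0)
    ENNReal.coe_ne_top hsupf' hsupg' hyp'
  have hint : (∫⁻ x, f' x) * (∫⁻ x, g' x) = (∫⁻ x, f x) * (∫⁻ x, g x) := by
    rw [hf', hg', lintegral_const_mul _ hf, lintegral_const_mul _ hg]
    calc (cf : ℝ≥0∞) * (∫⁻ x, f x) * ((cg : ℝ≥0∞) * ∫⁻ x, g x)
        = ((cf * cg : ℝ≥0) : ℝ≥0∞) * ((∫⁻ x, f x) * ∫⁻ x, g x) := by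
          rw [ENNReal.coe_mul]; ring
    _ = (∫⁻ x, f x) * (∫⁻ x, g x) := by rw [hcfcg]; simp
  have h4 : 4 * ((∫⁻ x, f x) * (∫⁻ x, g x)) ≤ 4 * (∫⁻ x, h x) ^ 2 := by
    calc 4 * ((∫⁻ x, f x) * (∫⁻ x, g x)) = 4 * ((∫⁻ x, f' x) * (∫⁻ x, g' x)) := by rw [hint]
    _ ≤ ((∫⁻ x, f' x) + (∫⁻ x, g' x)) ^ 2 := amgm_ennreal _ _
    _ ≤ (2 * ∫⁻ x, h x) ^ 2 := pow_le_pow_left' core 2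
    _ = 4 * (∫⁻ x, h x) ^ 2 := by rw [mul_pow]; norm_num
  exact (ENNReal.mul_le_mul_iff_right (by norm_num) (by norm_num)).mp h4

lemma isup_min_nat (a : ℝ≥0∞) : (⨆ n : ℕ, min a n) = a := by
  apply le_antisymm (iSup_le fun n => min_le_left _ _)
  rcases eq_or_ne a ⊤ with ha | ha
  · have : (⨆ n : ℕ, min a (n:ℝ≥0∞)) = ⨆ n : ℕ, (n:ℝ≥0∞) := by
      apply iSup_congr; intro n; rw [ha]; simp
    rw [this, ENNReal.iSup_natCast]; exact le_top
  · obtain ⟨n, hn⟩ := ENNReal.exists_nat_gt ha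
    exact le_trans (le_of_eq (min_eq_left hn.le).symm) (le_iSup (fun n : ℕ => min a n) n)

lemma pl_one (f g h : ℝ → ℝ≥0∞) (hf : Measurable f) (hg : Measurable g) (hh : Measurable h)
    (hyp : ∀ x y, f x * g y ≤ (h ((x + y) / 2)) ^ 2) :
    (∫⁻ x, f x) * (∫⁻ x, g x) ≤ (∫⁻ x, h x) ^ 2 := by
  classical
  have key : ∀ n : ℕ, (∫⁻ x, min (f x) n) * (∫⁻ x, min (g x) n) ≤ (∫⁻ x, h x) ^ 2 := by
    intro n
    apply pl_one_bounded _ _ h (hf.min measurable_const) (hg.min measurable_const) hh n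
      (fun x => min_le_right _ _) (fun x => min_le_right _ _)
    intro x y
    exact le_trans (mul_le_mul' (min_le_left _ _) (min_le_left _ _)) (hyp x y)
  have hfi : (∫⁻ x, f x) = ⨆ n : ℕ, ∫⁻ x, min (f x) n := by
    rw [← lintegral_iSup (fun n => hf.min measurable_const)
      (fun n m hnm x => min_le_min le_rfl (Nat.cast_le.2 hnm))]
    apply lintegral_congr; intro x; rw [isup_min_nat]
  have hgi : (∫⁻ x, g x) = ⨆ n : ℕ, ∫⁻ x, min (g x) n := by
    rw [← lintegral_iSup (fun n => hg.min measurable_const)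
      (fun n m hnm x => min_le_min le_rfl (Nat.cast_le.2 hnm))]
    apply lintegral_congr; intro x; rw [isup_min_nat]
  rw [hfi, hgi, ENNReal.iSup_mul]
  apply iSup_le; intro i
  rw [ENNReal.mul_iSup]
  apply iSup_le; intro j
  calc (∫⁻ x, min (f x) i) * (∫⁻ x, min (g x) j)
      ≤ (∫⁻ x, min (f x) (((max i j : ℕ)) : ℝ≥0∞)) * (∫⁻ x, min (g x) (((max i j : ℕ)) : ℝ≥0∞)) :=
        mul_le_mul' (lintegral_mono fun x => min_le_min le_rfl (Nat.cast_le.2 (le_max_left _ _)))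
          (lintegral_mono fun x => min_le_min le_rfl (Nat.cast_le.2 (le_max_right _ _)))
    _ ≤ (∫⁻ x, h x) ^ 2 := key (max i j)

theorem pl_pi : ∀ (d : ℕ) (f g h : (Fin d → ℝ) → ℝ≥0∞), Measurable f → Measurable g →
    Measurable h → (∀ x y, f x * g y ≤ (h (fun i => (x i + y i) / 2)) ^ 2) →
    (∫⁻ x, f x) * (∫⁻ y, g y) ≤ (∫⁻ z, h z) ^ 2 := by
  intro d
  induction d with
  | zero =>
    intro f g h hf hg hh hyp
    have huniq : ∀ x : Fin 0 → ℝ, x = (fun i => i.elim0) := by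
      intro x; funext i; exact i.elim0
    have hvol : (volume : Measure (Fin 0 → ℝ)) Set.univ = 1 := by
      simp [MeasureTheory.volume_pi, Measure.pi_univ]
    have hint : ∀ φ : (Fin 0 → ℝ) → ℝ≥0∞, (∫⁻ x, φ x) = φ (fun i => i.elim0) := by
      intro φ
      rw [show (fun x => φ x) = (fun _ : Fin 0 → ℝ => φ (fun i => i.elim0)) from
        funext fun x => by rw [huniq x], lintegral_const, hvol, mul_one]
    rw [hint f, hint g, hint h]
    have := hyp (fun i => i.elim0) (fun i => i.elim0)
    rwa [show (fun i : Fin 0 => (((fun i : Fin 0 => i.elim0) : Fin 0 → ℝ) i +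
      ((fun i : Fin 0 => i.elim0) : Fin 0 → ℝ) i) / 2) = (fun i : Fin 0 => i.elim0) from
      funext fun i => i.elim0] at this
  | succ d IH =>
    intro f g h hf hg hh hyp
    set e := MeasurableEquiv.piFinSuccAbove (fun _ : Fin (d + 1) => ℝ) 0 with he
    have mp : MeasurePreserving e volume ((volume : Measure ℝ).prod (volume : Measure (Fin d → ℝ))) := by
      have := measurePreserving_piFinSuccAbove (fun _ : Fin (d + 1) => (volume : Measure ℝ)) 0
      simpa [MeasureTheory.volume_pi, he] using this
    have mps := mp.symm
    -- transfer lintegrals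
    have transfer : ∀ φ : (Fin (d + 1) → ℝ) → ℝ≥0∞, Measurable φ →
        (∫⁻ x, φ x) = ∫⁻ s : ℝ, ∫⁻ y : Fin d → ℝ, φ (e.symm (s, y)) := by
      intro φ hφ
      rw [← mps.lintegral_comp hφ]
      exact lintegral_prod _ ((hφ.comp e.symm.measurable).aemeasurable)
    -- slices
    have slicelin : ∀ (a b : ℝ) (x y : Fin d → ℝ),
        e.symm ((a + b) / 2, fun i => (x i + y i) / 2) =
          fun i => (e.symm (a, x) i + e.symm (b, y) i) / 2 := by
      intro a b x y
      funext i
      simp only [he, MeasurableEquiv.piFinSuccAbove_symm_apply]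
      refine Fin.cases ?_ (fun j => ?_) i
      · simp [Fin.insertNth]
      · simp [Fin.insertNth]
    set F : ℝ → ℝ≥0∞ := fun s => ∫⁻ y, f (e.symm (s, y)) with hF
    set G : ℝ → ℝ≥0∞ := fun s => ∫⁻ y, g (e.symm (s, y)) with hG
    set H : ℝ → ℝ≥0∞ := fun s => ∫⁻ y, h (e.symm (s, y)) with hH
    have hFm : Measurable F := Measurable.lintegral_prod_right (hf.comp e.symm.measurable)
    have hGm : Measurable G := Measurable.lintegral_prod_right (hg.comp e.symm.measurable)
    have hHm : Measurable H := Measurable.lintegral_prod_right (hh.comp e.symm.measurable)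
    have key : ∀ s s' : ℝ, F s * G s' ≤ (H ((s + s') / 2)) ^ 2 := by
      intro s s'
      apply IH (fun y => f (e.symm (s, y))) (fun y => g (e.symm (s', y)))
        (fun y => h (e.symm ((s + s') / 2, y)))
        (hf.comp (e.symm.measurable.comp measurable_prodMk_left))
        (hg.comp (e.symm.measurable.comp measurable_prodMk_left))
        (hh.comp (e.symm.measurable.comp measurable_prodMk_left))
      intro x y
      rw [slicelin s s' x y]
      exact hyp _ _
    rw [transfer f hf, transfer g hg, transfer h hh]
    exact pl_one F G H hFm hGm hHm key


end AuxPL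

section AuxQ
variable {d : ℕ} {η M : ℝ} {g : Euc d → ℝ}

def qfun (d : ℕ) (η : ℝ) (g : Euc d → ℝ) (u : Euc d) (y : Euc d) : ℝ :=
  Real.exp (-‖y - u‖ ^ 2 / (4 * η) - g y)

lemma qfun_pos (u y : Euc d) : 0 < qfun d η g u y := Real.exp_pos _

lemma Zfun_eq (u : Euc d) : Zfun d η g u = ∫ y, qfun d η g u y := rfl

lemma g_cont (hgl : ∀ x y : Euc d, |g x - g y| ≤ M * ‖x - y‖) : Continuous g := by
  have : LipschitzWith (Real.toNNReal M) g := by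
    apply LipschitzWith.of_dist_le_mul
    intro x y
    rw [Real.dist_eq, dist_eq_norm]
    calc |g x - g y| ≤ M * ‖x - y‖ := hgl x y
    _ ≤ Real.toNNReal M * ‖x - y‖ :=
        mul_le_mul_of_nonneg_right (Real.le_coe_toNNReal M) (norm_nonneg _)
  exact this.continuous

lemma qfun_cont (hgl : ∀ x y : Euc d, |g x - g y| ≤ M * ‖x - y‖) (u : Euc d) :
    Continuous (qfun d η g u) := by
  apply Real.continuous_exp.comp
  apply Continuous.sub _ (g_cont hgl)
  exact (((continuous_id.sub continuous_const).norm.pow 2).neg).div_const _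

lemma gauss_integrable (c : ℝ) (hc : 0 < c) :
    Integrable (fun y : Euc d => Real.exp (-c * ‖y‖ ^ 2)) := by
  have h := GaussianFourier.integrable_cexp_neg_mul_sq_norm_add
    (V := EuclideanSpace ℝ (Fin d)) (b := (c : ℂ)) (by simpa using hc) 0 0
  have h2 := h.re
  apply h2.congr
  apply Filter.Eventually.of_forall
  intro y
  have : (-(c:ℂ) * (‖y‖:ℂ) ^ 2 + 0 * (inner ℝ (0 : Euc d) y : ℝ)) = ((-c * ‖y‖^2 : ℝ) : ℂ) := by
    push_cast; ring
  simp only [this, RCLike.re_to_complex, Complex.exp_ofReal_re]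

lemma qfun_integrable (hη : 0 < η) (hgl : ∀ x y : Euc d, |g x - g y| ≤ M * ‖x - y‖)
    (u : Euc d) : Integrable (qfun d η g u) := by
  set c : ℝ := (16 * η)⁻¹ with hc
  have hcpos : 0 < c := by positivity
  set B : ℝ := ‖u‖ ^ 2 / (4 * η) - g 0 + 4 * η * M ^ 2 with hB
  apply Integrable.mono' (((gauss_integrable c hcpos).const_mul (Real.exp B)))
    (qfun_cont hgl u).aestronglyMeasurable
  apply Filter.Eventually.of_forall
  intro y
  rw [Real.norm_of_nonneg (qfun_pos u y).le]
  have key : -‖y - u‖ ^ 2 / (4 * η) - g y ≤ B + (-c * ‖y‖ ^ 2) := by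
    have hA : ‖y‖ ^ 2 ≤ 2 * ‖y - u‖ ^ 2 + 2 * ‖u‖ ^ 2 := by
      have h1 : ‖y‖ ≤ ‖y - u‖ + ‖u‖ := by
        calc ‖y‖ = ‖(y - u) + u‖ := by rw [sub_add_cancel]
        _ ≤ ‖y - u‖ + ‖u‖ := norm_add_le _ _
      nlinarith [mul_self_le_mul_self (norm_nonneg y) h1, sq_nonneg (‖y - u‖ - ‖u‖),
        norm_nonneg y, norm_nonneg (y - u), norm_nonneg u]
    have hBnd : -g y ≤ -g 0 + M * ‖y‖ := by
      have := hgl 0 y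
      rw [zero_sub, norm_neg] at this
      have := abs_le.mp this
      linarith [this.1]
    have hC : M * ‖y‖ ≤ ‖y‖ ^ 2 / (16 * η) + 4 * η * M ^ 2 := by
      have h1' : 16 * η * (M * ‖y‖) ≤ ‖y‖ ^ 2 + 64 * η ^ 2 * M ^ 2 := by
        nlinarith [sq_nonneg (‖y‖ - 8 * η * M)]
      have h2' : M * ‖y‖ ≤ (‖y‖ ^ 2 + 64 * η ^ 2 * M ^ 2) / (16 * η) := by
        rw [le_div_iff₀ (by positivity)]; linarith
      have h3' : (‖y‖ ^ 2 + 64 * η ^ 2 * M ^ 2) / (16 * η) = ‖y‖ ^ 2 / (16 * η) + 4 * η * M ^ 2 := by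
        field_simp; ring
      linarith [h2', h3'.le, h3'.ge]
    have hquad : -‖y - u‖ ^ 2 / (4 * η) ≤ (-‖y‖ ^ 2 / 2 + ‖u‖ ^ 2) / (4 * η) := by
      apply div_le_div_of_nonneg_right ?_ (by positivity)
      · linarith
    have e1 : (-‖y‖ ^ 2 / 2 + ‖u‖ ^ 2) / (4 * η) = -‖y‖ ^ 2 / (8 * η) + ‖u‖ ^ 2 / (4 * η) := by
      field_simp; ring
    have e2 : -‖y‖ ^ 2 / (8 * η) + ‖y‖ ^ 2 / (16 * η) = -c * ‖y‖ ^ 2 := by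
      rw [hc]; field_simp; ring
    calc -‖y - u‖ ^ 2 / (4 * η) - g y
        ≤ (-‖y‖ ^ 2 / 2 + ‖u‖ ^ 2) / (4 * η) + (-g 0 + M * ‖y‖) := by linarith
      _ ≤ (-‖y‖ ^ 2 / (8 * η) + ‖u‖ ^ 2 / (4 * η)) +
          (-g 0 + (‖y‖ ^ 2 / (16 * η) + 4 * η * M ^ 2)) := by rw [e1]; linarith
      _ = B + (-c * ‖y‖ ^ 2) := by rw [hB, ← e2]; ring
  calc qfun d η g u y ≤ Real.exp (B + (-c * ‖y‖ ^ 2)) := Real.exp_le_exp.mpr key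
  _ = Real.exp B * Real.exp (-c * ‖y‖ ^ 2) := Real.exp_add _ _

lemma Zfun_pos (hd : 1 ≤ d) (hη : 0 < η) (hgl : ∀ x y : Euc d, |g x - g y| ≤ M * ‖x - y‖)
    (u : Euc d) : 0 < Zfun d η g u := by
  rw [Zfun_eq]
  rw [integral_pos_iff_support_of_nonneg_ae
    (Filter.Eventually.of_forall fun y => (qfun_pos u y).le) (qfun_integrable hη hgl u)]
  have : Function.support (qfun d η g u) = Set.univ := by
    ext y; simp [Function.mem_support, (qfun_pos (η := η) (g := g) u y).ne']
  rw [this]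
  exact (isOpen_univ.measure_pos volume ⟨0, trivial⟩)

lemma Zfun_lintegral (hη : 0 < η) (hgl : ∀ x y : Euc d, |g x - g y| ≤ M * ‖x - y‖)
    (u : Euc d) :
    (∫⁻ y, ENNReal.ofReal (qfun d η g u y)) = ENNReal.ofReal (Zfun d η g u) := by
  rw [Zfun_eq, ofReal_integral_eq_lintegral_ofReal (qfun_integrable hη hgl u)
    (Filter.Eventually.of_forall fun y => (qfun_pos u y).le)]


end AuxQ

theorem pl_euc (d : ℕ) (f g h : Euc d → ℝ≥0∞) (hf : Measurable f) (hg : Measurable g)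
    (hh : Measurable h)
    (hyp : ∀ x y : Euc d, f x * g y ≤ (h ((2:ℝ)⁻¹ • (x + y))) ^ 2) :
    (∫⁻ x, f x) * (∫⁻ y, g y) ≤ (∫⁻ z, h z) ^ 2 := by
  set e := (MeasurableEquiv.toLp 2 (Fin d → ℝ)).symm with he
  have mp := EuclideanSpace.volume_preserving_symm_measurableEquiv_toLp (Fin d)
  have mps : MeasurePreserving (⇑e.symm) volume volume := mp.symm
  have transfer : ∀ φ : Euc d → ℝ≥0∞, Measurable φ →
      (∫⁻ x, φ x) = ∫⁻ v : Fin d → ℝ, φ (e.symm v) := fun φ hφ => (mps.lintegral_comp hφ).symm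
  have lin : ∀ x y : Fin d → ℝ,
      (e.symm (fun i => (x i + y i) / 2)) = (2:ℝ)⁻¹ • (e.symm x + e.symm y) := by
    intro x y
    ext i
    simp [he]
    ring
  rw [transfer f hf, transfer g hg, transfer h hh]
  apply pl_pi d _ _ _ (hf.comp e.symm.measurable) (hg.comp e.symm.measurable)
    (hh.comp e.symm.measurable)
  intro x y
  simp only [Function.comp_apply]
  rw [lin x y]
  exact hyp _ _

theorem prekopa_Z {d : ℕ} {η M : ℝ} {g : Euc d → ℝ} (hd : 1 ≤ d) (hη : 0 < η)
    (hgl : ∀ x y : Euc d, |g x - g y| ≤ M * ‖x - y‖)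
    (hgconv : ConvexOn ℝ Set.univ g) (u₁ u₂ : Euc d) :
    Zfun d η g (u₁ + (u₁ - u₂)) * Zfun d η g u₂ ≤ (Zfun d η g u₁) ^ 2 := by
  set u₃ := u₁ + (u₁ - u₂) with hu₃
  have gc : Continuous g := by
    have : LipschitzWith (Real.toNNReal M) g := by
      apply LipschitzWith.of_dist_le_mul
      intro x y
      rw [Real.dist_eq, dist_eq_norm]
      exact le_trans (hgl x y) (mul_le_mul_of_nonneg_right (Real.le_coe_toNNReal M)
        (norm_nonneg _))
    exact this.continuous
  have key := pl_euc d (fun y => ENNReal.ofReal (qfun d η g u₃ y))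
    (fun y => ENNReal.ofReal (qfun d η g u₂ y)) (fun y => ENNReal.ofReal (qfun d η g u₁ y))
    ((qfun_cont hgl u₃).measurable.ennreal_ofReal)
    ((qfun_cont hgl u₂).measurable.ennreal_ofReal)
    ((qfun_cont hgl u₁).measurable.ennreal_ofReal) ?_
  · rw [Zfun_lintegral hη hgl u₃, Zfun_lintegral hη hgl u₂, Zfun_lintegral hη hgl u₁] at key
    rw [← ENNReal.ofReal_mul (Zfun_pos hd hη hgl u₃).le, ← ENNReal.ofReal_pow
      (Zfun_pos hd hη hgl u₁).le] at key
    exact (ENNReal.ofReal_le_ofReal_iff (by positivity)).mp key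
  · intro x y
    rw [← ENNReal.ofReal_mul (qfun_pos u₃ x).le, ← ENNReal.ofReal_pow (qfun_pos u₁ _).le]
    apply ENNReal.ofReal_le_ofReal
    set m := (2:ℝ)⁻¹ • (x + y) with hm
    rw [qfun, qfun, qfun, ← Real.exp_add, ← Real.exp_nat_mul]
    apply Real.exp_le_exp.mpr
    have hgmid : g m ≤ (g x + g y) / 2 := by
      have h2 := hgconv.2 (Set.mem_univ x) (Set.mem_univ y)
        (by norm_num : (0:ℝ) ≤ 1/2) (by norm_num : (0:ℝ) ≤ 1/2) (by norm_num)
      have : (1/2 : ℝ) • x + (1/2 : ℝ) • y = m := by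
        rw [hm, smul_add]; norm_num
      rw [this] at h2
      simp only [smul_eq_mul] at h2
      linarith [h2]
    have hmid : m - u₁ = (2:ℝ)⁻¹ • ((x - u₃) + (y - u₂)) := by
      rw [hm, hu₃]
      module
    have hquad : 2 * ‖m - u₁‖ ^ 2 ≤ ‖x - u₃‖ ^ 2 + ‖y - u₂‖ ^ 2 := by
      rw [hmid, norm_smul]
      have hpar : ‖(x - u₃) + (y - u₂)‖ ^ 2 ≤ 2 * ‖x - u₃‖ ^ 2 + 2 * ‖y - u₂‖ ^ 2 := by
        rw [norm_add_sq_real]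
        nlinarith [real_inner_le_norm (x - u₃) (y - u₂), sq_nonneg (‖x - u₃‖ - ‖y - u₂‖)]
      rw [show ‖(2:ℝ)⁻¹‖ = (2:ℝ)⁻¹ by simp [abs_of_pos]]
      nlinarith [hpar]
    have h4η : (0:ℝ) < 4 * η := by positivity
    have hquad2 : 2 * (‖m - u₁‖ ^ 2 / (4 * η)) ≤ ‖x - u₃‖ ^ 2 / (4 * η) + ‖y - u₂‖ ^ 2 / (4 * η) := by
      rw [← add_div, ← mul_div_assoc]
      exact div_le_div_of_nonneg_right hquad h4η.le
    push_cast
    have hgoal1 : -‖x - u₃‖ ^ 2 / (4 * η) - g x + (-‖y - u₂‖ ^ 2 / (4 * η) - g y) =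
        -(‖x - u₃‖ ^ 2 / (4 * η) + ‖y - u₂‖ ^ 2 / (4 * η)) - (g x + g y) := by ring
    have hgoal2 : (2:ℝ) * (-‖m - u₁‖ ^ 2 / (4 * η) - g m) =
        -(2 * (‖m - u₁‖ ^ 2 / (4 * η))) - 2 * g m := by ring
    rw [hgoal1, hgoal2]
    have h1 := hquad2
    have h2 := hgmid
    set P := ‖x - u₃‖ ^ 2 / (4 * η) + ‖y - u₂‖ ^ 2 / (4 * η)
    set Q := 2 * (‖m - u₁‖ ^ 2 / (4 * η))
    linarith [h1, h2]

theorem l1_bound {d : ℕ} {η M : ℝ} {g : Euc d → ℝ} (hd : 1 ≤ d) (hη : 0 < η)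
    (hgl : ∀ x y : Euc d, |g x - g y| ≤ M * ‖x - y‖)
    (hgconv : ConvexOn ℝ Set.univ g) (u₁ u₂ : Euc d) :
    ∫ y, |(Zfun d η g u₁)⁻¹ * qfun d η g u₁ y - (Zfun d η g u₂)⁻¹ * qfun d η g u₂ y| ≤
      Real.sqrt (Real.exp (‖u₁ - u₂‖ ^ 2 / (2 * η)) - 1) := by
  set u₃ : Euc d := u₁ + (u₁ - u₂) with hu₃
  set Z₁ := Zfun d η g u₁ with hZ₁
  set Z₂ := Zfun d η g u₂ with hZ₂
  set Z₃ := Zfun d η g u₃ with hZ₃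
  have hZ₁p : 0 < Z₁ := Zfun_pos hd hη hgl u₁
  have hZ₂p : 0 < Z₂ := Zfun_pos hd hη hgl u₂
  have hZ₃p : 0 < Z₃ := Zfun_pos hd hη hgl u₃
  set K : ℝ := ‖u₁ - u₂‖ ^ 2 / (2 * η) with hK
  have hKnn : 0 ≤ K := by positivity
  set r : Euc d → ℝ := fun y =>
    Real.exp ((2 * ⟪y, u₁ - u₂⟫ + ‖u₂‖ ^ 2 - ‖u₁‖ ^ 2) / (4 * η)) with hr
  have hrcont : Continuous r := by
    apply Real.continuous_exp.comp
    apply Continuous.div_const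
    apply Continuous.sub (Continuous.add (continuous_const.mul
      (continuous_id.inner continuous_const)) continuous_const) continuous_const
  -- the two exponential identities
  have rid1 : ∀ y, qfun d η g u₂ y * r y = qfun d η g u₁ y := by
    intro y
    rw [hr, qfun, qfun, ← Real.exp_add]
    congr 1
    have h1 : ‖y - u₂‖ ^ 2 = ‖y‖ ^ 2 - 2 * ⟪y, u₂⟫ + ‖u₂‖ ^ 2 := norm_sub_sq_real y u₂
    have h2 : ‖y - u₁‖ ^ 2 = ‖y‖ ^ 2 - 2 * ⟪y, u₁⟫ + ‖u₁‖ ^ 2 := norm_sub_sq_real y u₁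
    have h3 : ⟪y, u₁ - u₂⟫ = ⟪y, u₁⟫ - ⟪y, u₂⟫ := inner_sub_right y u₁ u₂
    rw [h1, h2, h3]
    field_simp
    ring
  have rid2 : ∀ y, qfun d η g u₁ y * r y = qfun d η g u₃ y * Real.exp K := by
    intro y
    rw [hr, qfun, qfun, ← Real.exp_add, ← Real.exp_add]
    congr 1
    have h2 : ‖y - u₁‖ ^ 2 = ‖y‖ ^ 2 - 2 * ⟪y, u₁⟫ + ‖u₁‖ ^ 2 := norm_sub_sq_real y u₁
    have h3 : ⟪y, u₁ - u₂⟫ = ⟪y, u₁⟫ - ⟪y, u₂⟫ := inner_sub_right y u₁ u₂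
    have h4 : ‖y - u₃‖ ^ 2 = ‖y‖ ^ 2 - 2 * ⟪y, u₃⟫ + ‖u₃‖ ^ 2 := norm_sub_sq_real y u₃
    have h5 : ⟪y, u₃⟫ = ⟪y, u₁⟫ + (⟪y, u₁⟫ - ⟪y, u₂⟫) := by
      rw [hu₃, inner_add_right, inner_sub_right]
    have h6 : ‖u₃‖ ^ 2 = ‖u₁‖ ^ 2 + 2 * ⟪u₁, u₁ - u₂⟫ + ‖u₁ - u₂‖ ^ 2 := norm_add_sq_real u₁ _
    have h7 : ⟪u₁, u₁ - u₂⟫ = ‖u₁‖ ^ 2 - ⟪u₁, u₂⟫ := by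
      rw [inner_sub_right, real_inner_self_eq_norm_sq]
    have h8 : ‖u₁ - u₂‖ ^ 2 = ‖u₁‖ ^ 2 - 2 * ⟪u₁, u₂⟫ + ‖u₂‖ ^ 2 := norm_sub_sq_real u₁ u₂
    rw [hK, h2, h3, h4, h5, h6, h7, h8]
    field_simp
    ring
  -- integrability facts
  have Iq1 : Integrable (qfun d η g u₁) := qfun_integrable hη hgl u₁
  have Iq2 : Integrable (qfun d η g u₂) := qfun_integrable hη hgl u₂
  have Iq3 : Integrable (qfun d η g u₃) := qfun_integrable hη hgl u₃
  have e2r : (fun y => qfun d η g u₂ y * r y) = qfun d η g u₁ := funext rid1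
  have Iq2r : Integrable (fun y => qfun d η g u₂ y * r y) := by rw [e2r]; exact Iq1
  have e2r2 : (fun y => qfun d η g u₂ y * r y ^ 2) = fun y => qfun d η g u₃ y * Real.exp K := by
    funext y
    rw [pow_two, ← mul_assoc, rid1 y, rid2 y]
  have Iq2r2 : Integrable (fun y => qfun d η g u₂ y * r y ^ 2) := by
    rw [e2r2]; exact Iq3.mul_const _
  -- integral values
  have v2r : (∫ y, qfun d η g u₂ y * r y) = Z₁ := by rw [e2r, hZ₁, Zfun_eq]
  have v2r2 : (∫ y, qfun d η g u₂ y * r y ^ 2) = Z₃ * Real.exp K := by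
    rw [e2r2, integral_mul_const, hZ₃, Zfun_eq]
  set C : ℝ := Z₂ / Z₁ with hC
  have hCp : 0 < C := by positivity
  set X : Euc d → ℝ := fun y => C * r y with hX
  -- pointwise identity for the difference of densities
  have diffid : ∀ y, Z₁⁻¹ * qfun d η g u₁ y - Z₂⁻¹ * qfun d η g u₂ y =
      Z₂⁻¹ * (qfun d η g u₂ y * (X y - 1)) := by
    intro y
    rw [hX, ← rid1 y, hC]
    field_simp
  -- Cauchy-Schwarz setup
  set φ : Euc d → ℝ := fun y => Real.sqrt (qfun d η g u₂ y) with hφ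
  set ψ : Euc d → ℝ := fun y => Real.sqrt (qfun d η g u₂ y) * |X y - 1| with hψ
  have hφcont : Continuous φ := Real.continuous_sqrt.comp (qfun_cont hgl u₂)
  have hXcont : Continuous X := continuous_const.mul hrcont
  have hψcont : Continuous ψ := hφcont.mul ((hXcont.sub continuous_const).abs)
  have hφsq : (fun y => φ y ^ 2) = qfun d η g u₂ := by
    funext y; rw [hφ]; exact Real.sq_sqrt (qfun_pos u₂ y).le
  have hψsq : (fun y => ψ y ^ 2) = fun y => qfun d η g u₂ y * (X y - 1) ^ 2 := by
    funext y
    rw [hψ, mul_pow, Real.sq_sqrt (qfun_pos u₂ y).le, sq_abs]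
  have hIψsq : Integrable (fun y => qfun d η g u₂ y * (X y - 1) ^ 2) := by
    have expand : (fun y => qfun d η g u₂ y * (X y - 1) ^ 2) =
        fun y => C ^ 2 * (qfun d η g u₂ y * r y ^ 2) - 2 * C * (qfun d η g u₂ y * r y) +
          qfun d η g u₂ y := by
      funext y; rw [hX]; ring
    rw [expand]
    exact ((Iq2r2.const_mul _).sub (Iq2r.const_mul _)).add Iq2
  have vψsq : (∫ y, qfun d η g u₂ y * (X y - 1) ^ 2) =
      C ^ 2 * (Z₃ * Real.exp K) - 2 * C * Z₁ + Z₂ := by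
    have expand : (fun y => qfun d η g u₂ y * (X y - 1) ^ 2) =
        fun y => C ^ 2 * (qfun d η g u₂ y * r y ^ 2) - 2 * C * (qfun d η g u₂ y * r y) +
          qfun d η g u₂ y := by
      funext y; rw [hX]; ring
    rw [expand, integral_add (f := fun y => C ^ 2 * (qfun d η g u₂ y * r y ^ 2) -
        2 * C * (qfun d η g u₂ y * r y)) (g := qfun d η g u₂)
        (((Iq2r2.const_mul _).sub (Iq2r.const_mul _))) Iq2,
      integral_sub (f := fun y => C ^ 2 * (qfun d η g u₂ y * r y ^ 2))
        (g := fun y => 2 * C * (qfun d η g u₂ y * r y))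
        (Iq2r2.const_mul _) (Iq2r.const_mul _), integral_const_mul, integral_const_mul,
      v2r, v2r2, hZ₂, Zfun_eq]
  -- the variance bound via Prekopa
  have varbound : (∫ y, qfun d η g u₂ y * (X y - 1) ^ 2) ≤ Z₂ * (Real.exp K - 1) := by
    rw [vψsq]
    have hpre : Z₃ * Z₂ ≤ Z₁ ^ 2 := prekopa_Z hd hη hgl hgconv u₁ u₂
    have hCZ₁ : C * Z₁ = Z₂ := by rw [hC]; field_simp
    have key : C ^ 2 * Z₃ ≤ Z₂ := by
      rw [hC, div_pow, div_mul_eq_mul_div, div_le_iff₀ (by positivity)]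
      nlinarith [hZ₂p, hpre]
    have hexpK : 0 < Real.exp K := Real.exp_pos _
    nlinarith [key, hexpK]
  -- Hölder / Cauchy-Schwarz
  have conj : (2:ℝ).HolderConjugate 2 := ⟨by norm_num, by norm_num, by norm_num⟩
  have hφmem : MemLp φ (ENNReal.ofReal 2) volume := by
    rw [show ENNReal.ofReal (2:ℝ) = 2 by norm_num]
    rw [memLp_two_iff_integrable_sq hφcont.aestronglyMeasurable]
    have : (fun y => φ y ^ 2) = qfun d η g u₂ := hφsq
    rw [this]; exact Iq2
  have hψmem : MemLp ψ (ENNReal.ofReal 2) volume := by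
    rw [show ENNReal.ofReal (2:ℝ) = 2 by norm_num]
    rw [memLp_two_iff_integrable_sq hψcont.aestronglyMeasurable]
    rw [hψsq]; exact hIψsq
  have holder := integral_mul_le_Lp_mul_Lq_of_nonneg conj
    (Filter.Eventually.of_forall fun y => Real.sqrt_nonneg _)
    (Filter.Eventually.of_forall fun y => mul_nonneg (Real.sqrt_nonneg _) (abs_nonneg _))
    hφmem hψmem
  -- rewrite rpow as pow
  have hrpow : ∀ (a : ℝ), 0 ≤ a → a ^ (2:ℝ) = a ^ (2:ℕ) := fun a ha => by
    rw [← Real.rpow_natCast a 2]; norm_num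
  have hφint : (∫ y, φ y ^ (2:ℝ)) = Z₂ := by
    have : (fun y => φ y ^ (2:ℝ)) = fun y => φ y ^ (2:ℕ) :=
      funext fun y => hrpow _ (Real.sqrt_nonneg _)
    rw [this, hφsq, hZ₂, Zfun_eq]
  have hψint : (∫ y, ψ y ^ (2:ℝ)) = ∫ y, qfun d η g u₂ y * (X y - 1) ^ 2 := by
    have : (fun y => ψ y ^ (2:ℝ)) = fun y => ψ y ^ (2:ℕ) :=
      funext fun y => hrpow _ (mul_nonneg (Real.sqrt_nonneg _) (abs_nonneg _))
    rw [this, hψsq]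
  rw [hφint, hψint] at holder
  -- assemble
  have habs : (fun y => |Z₁⁻¹ * qfun d η g u₁ y - Z₂⁻¹ * qfun d η g u₂ y|) =
      fun y => Z₂⁻¹ * (φ y * ψ y) := by
    funext y
    rw [diffid y, abs_mul, abs_of_nonneg (by positivity : (0:ℝ) ≤ Z₂⁻¹), abs_mul,
      abs_of_nonneg (qfun_pos u₂ y).le]
    congr 1
    rw [hφ, hψ, ← mul_assoc, Real.mul_self_sqrt (qfun_pos u₂ y).le]
  rw [habs]
  rw [integral_const_mul]
  have step : (∫ y, φ y * ψ y) ≤ Z₂ * Real.sqrt (Real.exp K - 1) := by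
    calc (∫ y, φ y * ψ y) ≤ Z₂ ^ ((1:ℝ)/2) *
        (∫ y, qfun d η g u₂ y * (X y - 1) ^ 2) ^ ((1:ℝ)/2) := holder
    _ ≤ Z₂ ^ ((1:ℝ)/2) * (Z₂ * (Real.exp K - 1)) ^ ((1:ℝ)/2) := by
        apply mul_le_mul_of_nonneg_left _ (Real.rpow_nonneg hZ₂p.le _)
        apply Real.rpow_le_rpow _ varbound (by norm_num)
        have : (0:ℝ) ≤ ∫ y, qfun d η g u₂ y * (X y - 1) ^ 2 :=
          integral_nonneg fun y => mul_nonneg (qfun_pos u₂ y).le (sq_nonneg _)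
        exact this
    _ = Real.sqrt Z₂ * Real.sqrt (Z₂ * (Real.exp K - 1)) := by
        rw [← Real.sqrt_eq_rpow, ← Real.sqrt_eq_rpow]
    _ = Z₂ * Real.sqrt (Real.exp K - 1) := by
        rw [Real.sqrt_mul hZ₂p.le, ← mul_assoc, Real.mul_self_sqrt hZ₂p.le]
  calc Z₂⁻¹ * ∫ y, φ y * ψ y ≤ Z₂⁻¹ * (Z₂ * Real.sqrt (Real.exp K - 1)) :=
        mul_le_mul_of_nonneg_left step (by positivity)
  _ = Real.sqrt (Real.exp K - 1) := by field_simp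

/-- total variation bound between two proposal distributions:
`d_TV(P_{x₁}, P_{x₂}) ≤ ‖x₁−x₂‖/√η` for `η < 1/(16L)`. -/
theorem proposal_tv_bound (d : ℕ) (η L M : ℝ) (f g : Euc d → ℝ)
    (hd : 1 ≤ d) (hL : 0 < L) (hη : 0 < η) (hη' : η < 1 / (16 * L))
    (hf : ContDiff ℝ 1 f)
    (hsmooth : ∀ x y : Euc d, ‖gradient f x - gradient f y‖ ≤ L * ‖x - y‖)
    (hgconv : ConvexOn ℝ Set.univ g)
    (hg : ∀ x y : Euc d, |g x - g y| ≤ M * ‖x - y‖) :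
    ∀ x₁ x₂ : Euc d,
      tvDist (propMeasure d η f g x₁) (propMeasure d η f g x₂) ≤
        ‖x₁ - x₂‖ / Real.sqrt η := by
  intro x₁ x₂
  set u₁ : Euc d := x₁ - η • gradient f x₁ with hu₁
  set u₂ : Euc d := x₂ - η • gradient f x₂ with hu₂
  have hp₁ : propDensity d η f g x₁ = fun y => (Zfun d η g u₁)⁻¹ * qfun d η g u₁ y := rfl
  have hp₂ : propDensity d η f g x₂ = fun y => (Zfun d η g u₂)⁻¹ * qfun d η g u₂ y := rfl
  have hZ₁p : 0 < Zfun d η g u₁ := Zfun_pos hd hη hg u₁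
  have hZ₂p : 0 < Zfun d η g u₂ := Zfun_pos hd hη hg u₂
  have pint : ∀ x : Euc d, Integrable (propDensity d η f g x) := by
    intro x
    exact (qfun_integrable hη hg (x - η • gradient f x)).const_mul _
  have pnn : ∀ x y : Euc d, 0 ≤ propDensity d η f g x y := by
    intro x y
    have : 0 < Zfun d η g (x - η • gradient f x) := Zfun_pos hd hη hg _
    exact mul_nonneg (by positivity) (Real.exp_pos _).le
  have pnorm : ∀ x : Euc d, (∫ y, propDensity d η f g x y) = 1 := by
    intro x
    have : 0 < Zfun d η g (x - η • gradient f x) := Zfun_pos hd hη hg _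
    rw [show propDensity d η f g x = fun y => (Zfun d η g (x - η • gradient f x))⁻¹ *
      qfun d η g (x - η • gradient f x) y from rfl, integral_const_mul, ← Zfun_eq,
      inv_mul_cancel₀ this.ne']
  have ptoReal : ∀ (x : Euc d) (A : Set (Euc d)), MeasurableSet A →
      (propMeasure d η f g x A).toReal = ∫ y in A, propDensity d η f g x y := by
    intro x A hA
    rw [propMeasure, withDensity_apply _ hA,
      ← ofReal_integral_eq_lintegral_ofReal ((pint x).restrict)
        (Filter.Eventually.of_forall fun y => pnn x y),
      ENNReal.toReal_ofReal (setIntegral_nonneg hA fun y _ => pnn x y)]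
  set ρ : ℝ := ‖x₁ - x₂‖ / Real.sqrt η with hρ
  have hρnn : 0 ≤ ρ := by positivity
  haveI : Nonempty {s : Set (Euc d) // MeasurableSet s} := ⟨⟨∅, MeasurableSet.empty⟩⟩
  unfold tvDist
  apply ciSup_le
  rintro ⟨A, hA⟩
  rw [ptoReal x₁ A hA, ptoReal x₂ A hA]
  by_cases hρ1 : 1 ≤ ρ
  · -- trivial bound by 1
    have b1 : ∫ y in A, propDensity d η f g x₁ y ≤ 1 := by
      rw [← pnorm x₁]
      exact setIntegral_le_integral (pint x₁) (Filter.Eventually.of_forall fun y => pnn x₁ y)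
    have b2 : ∫ y in A, propDensity d η f g x₂ y ≤ 1 := by
      rw [← pnorm x₂]
      exact setIntegral_le_integral (pint x₂) (Filter.Eventually.of_forall fun y => pnn x₂ y)
    have b3 : 0 ≤ ∫ y in A, propDensity d η f g x₁ y := setIntegral_nonneg hA fun y _ => pnn x₁ y
    have b4 : 0 ≤ ∫ y in A, propDensity d η f g x₂ y := setIntegral_nonneg hA fun y _ => pnn x₂ y
    have : |(∫ y in A, propDensity d η f g x₁ y) - ∫ y in A, propDensity d η f g x₂ y| ≤ 1 := by
      rw [abs_le]; constructor <;> linarith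
    linarith
  · push_neg at hρ1
    -- half L1 bound
    set p₁ := propDensity d η f g x₁ with hp₁'
    set p₂ := propDensity d η f g x₂ with hp₂'
    have hdiffint : Integrable (fun y => p₁ y - p₂ y) := (pint x₁).sub (pint x₂)
    have habsint : Integrable (fun y => |p₁ y - p₂ y|) := hdiffint.abs
    have h0 : (∫ y, (p₁ y - p₂ y)) = 0 := by
      rw [integral_sub (pint x₁) (pint x₂), pnorm x₁, pnorm x₂, sub_self]
    have hsplit : (∫ y in A, (p₁ y - p₂ y)) + (∫ y in Aᶜ, (p₁ y - p₂ y)) = 0 := by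
      rw [integral_add_compl hA hdiffint, h0]
    have habssplit : (∫ y in A, |p₁ y - p₂ y|) + (∫ y in Aᶜ, |p₁ y - p₂ y|)
        = ∫ y, |p₁ y - p₂ y| := integral_add_compl hA habsint
    have habs1 : |∫ y in A, (p₁ y - p₂ y)| ≤ ∫ y in A, |p₁ y - p₂ y| := by
      have := norm_integral_le_integral_norm (μ := volume.restrict A) (fun y => p₁ y - p₂ y)
      simpa [Real.norm_eq_abs] using this
    have habs2 : |∫ y in Aᶜ, (p₁ y - p₂ y)| ≤ ∫ y in Aᶜ, |p₁ y - p₂ y| := by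
      have := norm_integral_le_integral_norm (μ := volume.restrict Aᶜ) (fun y => p₁ y - p₂ y)
      simpa [Real.norm_eq_abs] using this
    have hsetsub : (∫ y in A, p₁ y) - (∫ y in A, p₂ y) = ∫ y in A, (p₁ y - p₂ y) :=
      (integral_sub ((pint x₁).restrict) ((pint x₂).restrict)).symm
    have half : |(∫ y in A, p₁ y) - ∫ y in A, p₂ y| ≤ (1/2) * ∫ y, |p₁ y - p₂ y| := by
      rw [hsetsub]
      have hneg : (∫ y in A, (p₁ y - p₂ y)) = -(∫ y in Aᶜ, (p₁ y - p₂ y)) := by linarith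
      have e1 : |∫ y in A, (p₁ y - p₂ y)| = |∫ y in Aᶜ, (p₁ y - p₂ y)| := by
        rw [hneg, abs_neg]
      have := abs_nonneg (∫ y in A, (p₁ y - p₂ y))
      linarith [habs1, habs2, e1, habssplit.ge, habssplit.le]
    -- apply the L1 bound
    have hl1 : (∫ y, |p₁ y - p₂ y|) ≤
        Real.sqrt (Real.exp (‖u₁ - u₂‖ ^ 2 / (2 * η)) - 1) :=
      l1_bound hd hη hg hgconv u₁ u₂
    -- numeric estimates
    set K : ℝ := ‖u₁ - u₂‖ ^ 2 / (2 * η) with hK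
    have hKnn : 0 ≤ K := by positivity
    have hηL : η * L ≤ 1 / 16 := by
      have h1 : η * (16 * L) < 1 := by
        calc η * (16 * L) < (1 / (16 * L)) * (16 * L) :=
              mul_lt_mul_of_pos_right hη' (by positivity)
        _ = 1 := by field_simp
      nlinarith
    have hΔu : ‖u₁ - u₂‖ ≤ (17/16) * ‖x₁ - x₂‖ := by
      have hdiff : u₁ - u₂ = (x₁ - x₂) - η • (gradient f x₁ - gradient f x₂) := by
        rw [hu₁, hu₂]; module
      calc ‖u₁ - u₂‖ = ‖(x₁ - x₂) - η • (gradient f x₁ - gradient f x₂)‖ := by rw [hdiff]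
      _ ≤ ‖x₁ - x₂‖ + ‖η • (gradient f x₁ - gradient f x₂)‖ := norm_sub_le _ _
      _ = ‖x₁ - x₂‖ + η * ‖gradient f x₁ - gradient f x₂‖ := by
            rw [norm_smul, Real.norm_of_nonneg hη.le]
      _ ≤ ‖x₁ - x₂‖ + η * (L * ‖x₁ - x₂‖) := by
            nlinarith [hsmooth x₁ x₂, hη.le]
      _ ≤ (17/16) * ‖x₁ - x₂‖ := by nlinarith [norm_nonneg (x₁ - x₂), hηL]
    have hρsq : ρ ^ 2 = ‖x₁ - x₂‖ ^ 2 / η := by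
      rw [hρ, div_pow, Real.sq_sqrt hη.le]
    have hKρ : K ≤ (289/512) * ρ ^ 2 := by
      rw [hK, hρsq]
      have h1 : ‖u₁ - u₂‖ ^ 2 ≤ (289/256) * ‖x₁ - x₂‖ ^ 2 := by
        nlinarith [hΔu, norm_nonneg (u₁ - u₂), norm_nonneg (x₁ - x₂)]
      rw [div_le_iff₀ (by positivity : (0:ℝ) < 2 * η)]
      calc ‖u₁ - u₂‖ ^ 2 ≤ (289/256) * ‖x₁ - x₂‖ ^ 2 := h1
      _ = 289/512 * (‖x₁ - x₂‖ ^ 2 / η) * (2 * η) := by field_simp; ring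
    have hK1 : K ≤ 289/512 := by nlinarith [hKρ, hρ1, hρnn]
    have hexpprod : Real.exp K * (1 - K) ≤ 1 := by
      have h1 : -K + 1 ≤ Real.exp (-K) := Real.add_one_le_exp (-K)
      have h2 : Real.exp K * (-K + 1) ≤ Real.exp K * Real.exp (-K) :=
        mul_le_mul_of_nonneg_left h1 (Real.exp_pos K).le
      rw [← Real.exp_add, add_neg_cancel, Real.exp_zero] at h2
      nlinarith [h2]
    have hexpK : Real.exp K ≤ 512/223 := by
      nlinarith [hexpprod, hK1, Real.exp_pos K]
    have hem1 : Real.exp K - 1 ≤ K * Real.exp K := by nlinarith [hexpprod]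
    have hfinal4 : Real.exp K - 1 ≤ 4 * ρ ^ 2 := by
      have hm := mul_le_mul hKρ hexpK (Real.exp_pos K).le
        (by positivity : (0:ℝ) ≤ 289/512 * ρ ^ 2)
      nlinarith [hm, hem1, sq_nonneg ρ]
    calc |(∫ y in A, p₁ y) - ∫ y in A, p₂ y| ≤ (1/2) * ∫ y, |p₁ y - p₂ y| := half
    _ ≤ (1/2) * Real.sqrt (Real.exp K - 1) := by
          apply mul_le_mul_of_nonneg_left _ (by norm_num : (0:ℝ) ≤ 1/2)
          exact hl1
    _ ≤ (1/2) * Real.sqrt (4 * ρ ^ 2) := by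
          apply mul_le_mul_of_nonneg_left (Real.sqrt_le_sqrt hfinal4) (by norm_num)
    _ = ρ := by
          rw [show (4:ℝ) * ρ ^ 2 = (2 * ρ) ^ 2 by ring, Real.sqrt_sq (by positivity)]
          ring
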